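/- In a unital coFrobenius bialgebra (A, μ, λ, η) with copairing c = (-1)^{|λ||μ|+|μ|}λη, the following identities hold: (1⊗μ⊗1)(c⊗c) = (λ⊗1)c = (-1)^{|λ|}(1⊗λ)c, and (1⊗μ)(λ⊗1) = (μ⊗1)(1⊗λ) = (μ⊗μ)(1⊗c⊗1) = (-1)^{|λ||μ|} λμ. -/

import Mathlib

open TensorProduct LinearMap
open scoped TensorProduct DirectSum

namespace GradedCoFrob

variable {R : Type} [CommRing R] {M : Type} [AddCommGroup M] [Module R M]

/-- The Koszul sign `(-1)^n` for `n : ℤ`. -/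
def ksign (n : ℤ) : ℤ := (((-1 : ℤˣ) ^ n : ℤˣ) : ℤ)

variable (𝒜 : ℤ → Submodule R M) [DirectSum.Decomposition 𝒜]

/-- Build a linear map `M →ₗ N` out of its values on the homogeneous pieces,
bundled linearly in the family of values. -/
noncomputable def fromPiecesHom {N : Type} [AddCommGroup N] [Module R N] :
    (∀ i : ℤ, 𝒜 i →ₗ[R] N) →ₗ[R] (M →ₗ[R] N) :=
  (LinearMap.lcomp R N (DirectSum.decomposeLinearEquiv 𝒜).toLinearMap).comp
    (DFinsupp.lsum R (M := fun i => 𝒜 i) (N := N)).toLinearMap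

/-- Build a linear map `M →ₗ N` out of its values on the homogeneous pieces. -/
noncomputable def fromPieces {N : Type} [AddCommGroup N] [Module R N]
    (f : ∀ i : ℤ, 𝒜 i →ₗ[R] N) : M →ₗ[R] N :=
  fromPiecesHom 𝒜 f

/-- Build a bilinear map `M →ₗ M →ₗ N` out of its values on pairs of homogeneous pieces. -/
noncomputable def fromPieces₂ {N : Type} [AddCommGroup N] [Module R N]
    (f : ∀ i j : ℤ, 𝒜 i →ₗ[R] 𝒜 j →ₗ[R] N) : M →ₗ[R] M →ₗ[R] N :=
  fromPieces 𝒜 (fun i => (fromPiecesHom 𝒜).comp (LinearMap.pi (fun j => f i j)))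

/-- The operator multiplying the degree `i` component by the Koszul sign `(-1)^(d*i)`. -/
noncomputable def signAction (d : ℤ) : M →ₗ[R] M :=
  fromPieces 𝒜 (fun i => ksign (d * i) • (𝒜 i).subtype)

/-- The Koszul twist `τ(a ⊗ b) = (-1)^{|a||b|} b ⊗ a`. -/
noncomputable def twist : M ⊗[R] M →ₗ[R] M ⊗[R] M :=
  TensorProduct.lift (fromPieces₂ 𝒜 (fun i j =>
    ksign (i * j) • ((((TensorProduct.mk R M M).flip).comp (𝒜 i).subtype).compl₂
      (𝒜 j).subtype)))

/-- Left contraction `(f ⊗ 1)(x ⊗ y) = f(x) • y` (no Koszul sign since `1` has degree `0`). -/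
noncomputable def contrL {N : Type} [AddCommGroup N] [Module R N]
    (f : N →ₗ[R] R) : N ⊗[R] M →ₗ[R] M :=
  TensorProduct.lift ((LinearMap.lsmul R M).comp f)

/-- Right contraction with Koszul sign:
`(1 ⊗ f)(x ⊗ y) = (-1)^{d|x|} f(y) • x` where `d` is the degree of `f`. -/
noncomputable def contrR {N : Type} [AddCommGroup N] [Module R N]
    (f : N →ₗ[R] R) (d : ℤ) : M ⊗[R] N →ₗ[R] M :=
  TensorProduct.lift ((((LinearMap.lsmul R M).comp f).flip).comp (signAction 𝒜 d))

/-- Koszul-signed evaluation of a pair of functionals on a tensor: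
`(x ⊗ y) ↦ f((-1)^{d₁|x|} x) * g((-1)^{d₂|y|} y)`. -/
noncomputable def ev2 (f g : M →ₗ[R] R) (d₁ d₂ : ℤ) : M ⊗[R] M →ₗ[R] R :=
  TensorProduct.lift (((LinearMap.mul R R).comp (f.comp (signAction 𝒜 d₁))).compl₂
    (g.comp (signAction 𝒜 d₂)))

/-- The map `c⃗ : A^∨ → A`, `f ↦ (-1)^{|f||c|}(f ⊗ 1)c`, implemented by putting the sign
`(-1)^{dc |x|}` on the first tensor factor of the copairing `c` (of degree `dc`). -/
noncomputable def cvec (c : M ⊗[R] M) (dc : ℤ) : (M →ₗ[R] R) →ₗ[R] M :=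
  (LinearMap.applyₗ ((LinearMap.rTensor M (signAction 𝒜 dc)) c)).comp
    ((TensorProduct.lift.equiv (RingHom.id R) M M M).toLinearMap.comp
      (LinearMap.llcomp R M R (M →ₗ[R] M) (LinearMap.lsmul R M)))

/-- The operation `(1 ⊗ c ⊗ 1) : A ⊗ A → (A ⊗ A) ⊗ (A ⊗ A)`,
`a ⊗ b ↦ (-1)^{|c||a|} (a ⊗ c₁) ⊗ (c₂ ⊗ b)` for a copairing `c` of degree `dc`. -/
noncomputable def midIns (c : M ⊗[R] M) (dc : ℤ) :
    M ⊗[R] M →ₗ[R] (M ⊗[R] M) ⊗[R] (M ⊗[R] M) :=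
  (TensorProduct.assoc R (M ⊗[R] M) M M).toLinearMap.comp
    (LinearMap.rTensor M
      (((TensorProduct.assoc R M M M).symm.toLinearMap).comp
        (((TensorProduct.mk R M (M ⊗[R] M)).flip c).comp (signAction 𝒜 dc))))

/-- The Koszul-signed cyclic permutation `σ(a⊗b⊗c) = (-1)^{(|a|+|b|)|c|} c⊗a⊗b`. -/
noncomputable def cyc : (M ⊗[R] M) ⊗[R] M →ₗ[R] (M ⊗[R] M) ⊗[R] M :=
  (LinearMap.rTensor M (twist 𝒜)).comp
    ((TensorProduct.assoc R M M M).symm.toLinearMap.comp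
      ((LinearMap.lTensor M (twist 𝒜)).comp (TensorProduct.assoc R M M M).toLinearMap))

/-- The submodule `A_i ⊗ A_j ⊆ A ⊗ A`. -/
noncomputable def tpiece (i j : ℤ) : Submodule R (M ⊗[R] M) :=
  LinearMap.range (TensorProduct.map (𝒜 i).subtype (𝒜 j).subtype)

/-- The degree `k` part `⨁_{i+j=k} A_i ⊗ A_j` of `A ⊗ A`. -/
noncomputable def tgrade (k : ℤ) : Submodule R (M ⊗[R] M) :=
  ⨆ i : ℤ, tpiece 𝒜 i (k - i)

/-- A product is homogeneous of degree `d`. -/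
def IsHomogProd (d : ℤ) (mu : M ⊗[R] M →ₗ[R] M) : Prop :=
  ∀ i j : ℤ, ∀ x ∈ 𝒜 i, ∀ y ∈ 𝒜 j, mu (x ⊗ₜ[R] y) ∈ 𝒜 (i + j + d)

/-- A coproduct is homogeneous of degree `d`. -/
def IsHomogCoprod (d : ℤ) (lam : M →ₗ[R] M ⊗[R] M) : Prop :=
  ∀ k : ℤ, ∀ x ∈ 𝒜 k, lam x ∈ tgrade 𝒜 (k + d)

/-- A scalar-valued functional is homogeneous of degree `d`. -/
def IsHomogFun (d : ℤ) (f : M →ₗ[R] R) : Prop :=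
  ∀ i : ℤ, i ≠ -d → ∀ x ∈ 𝒜 i, f x = 0

/-- A pairing is homogeneous of degree `d`. -/
def IsHomogPairing (d : ℤ) (p : M ⊗[R] M →ₗ[R] R) : Prop :=
  ∀ i j : ℤ, i + j ≠ -d → ∀ x ∈ 𝒜 i, ∀ y ∈ 𝒜 j, p (x ⊗ₜ[R] y) = 0

end GradedCoFrob
namespace GradedCoFrob

/-- A unital coFrobenius bialgebra structure on a ℤ-graded module
(Definition `defi:coFrobenius-unital-bialgebra`), with all Koszul sign conventions explicit. -/
structure UnitalCoFrob (R : Type) [CommRing R] {M : Type} [AddCommGroup M] [Module R M]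
    (𝒜 : ℤ → Submodule R M) [DirectSum.Decomposition 𝒜] where
  mu : M ⊗[R] M →ₗ[R] M
  lam : M →ₗ[R] M ⊗[R] M
  unit : M
  dm : ℤ
  dl : ℤ
  mu_homog : IsHomogProd 𝒜 dm mu
  lam_homog : IsHomogCoprod 𝒜 dl lam
  unit_homog : unit ∈ 𝒜 (-dm)
  /-- graded associativity `μ(μ⊗1) = (-1)^{|μ|} μ(1⊗μ)` -/
  mu_assoc : mu.comp (LinearMap.rTensor M mu) =
    ksign dm • (mu.comp ((TensorProduct.map (signAction 𝒜 dm) mu).comp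
      (TensorProduct.assoc R M M M).toLinearMap))
  /-- `(-1)^{|μ|} μ(η ⊗ 1) = 1` -/
  unit_left : ksign dm • (mu.comp ((TensorProduct.mk R M M) unit)) = LinearMap.id
  /-- `μ(1 ⊗ η) = 1` -/
  unit_right : mu.comp (((TensorProduct.mk R M M).flip unit).comp (signAction 𝒜 (-dm))) =
    LinearMap.id
  cop : M ⊗[R] M
  /-- the copairing `c = (-1)^{|λ||μ|+|μ|} λη` -/
  cop_def : cop = ksign (dl * dm + dm) • lam unit
  /-- `λ = (1⊗μ)(c⊗1)` -/
  cofrob_left : lam = (TensorProduct.map (signAction 𝒜 dm) mu).comp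
    ((TensorProduct.assoc R M M M).toLinearMap.comp (TensorProduct.mk R (M ⊗[R] M) M cop))
  /-- `λ = (-1)^{|μ|}(μ⊗1)(1⊗c)` -/
  cofrob_right : lam = ksign dm • ((LinearMap.rTensor M mu).comp
    ((TensorProduct.assoc R M M M).symm.toLinearMap.comp
      (((TensorProduct.mk R M (M ⊗[R] M)).flip cop).comp (signAction 𝒜 (dl - dm)))))
  /-- `τc = (-1)^{|λ|} c` -/
  cop_symm : twist 𝒜 cop = ksign dl • cop

/-- A biunital coFrobenius bialgebra structure on a ℤ-graded module
(Definition `defi:biunital-coFrobenius-bialgebra`), with all Koszul sign conventions explicit. -/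
structure BiunitalCoFrob (R : Type) [CommRing R] {M : Type} [AddCommGroup M] [Module R M]
    (𝒜 : ℤ → Submodule R M) [DirectSum.Decomposition 𝒜] where
  mu : M ⊗[R] M →ₗ[R] M
  lam : M →ₗ[R] M ⊗[R] M
  unit : M
  counit : M →ₗ[R] R
  dm : ℤ
  dl : ℤ
  mu_homog : IsHomogProd 𝒜 dm mu
  lam_homog : IsHomogCoprod 𝒜 dl lam
  unit_homog : unit ∈ 𝒜 (-dm)
  counit_homog : IsHomogFun 𝒜 (-dl) counit
  mu_assoc : mu.comp (LinearMap.rTensor M mu) =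
    ksign dm • (mu.comp ((TensorProduct.map (signAction 𝒜 dm) mu).comp
      (TensorProduct.assoc R M M M).toLinearMap))
  /-- graded coassociativity `(λ⊗1)λ = (-1)^{|λ|}(1⊗λ)λ` -/
  lam_coassoc : (LinearMap.rTensor M lam).comp lam =
    ksign dl • ((TensorProduct.assoc R M M M).symm.toLinearMap.comp
      ((TensorProduct.map (signAction 𝒜 dl) lam).comp lam))
  unit_left : ksign dm • (mu.comp ((TensorProduct.mk R M M) unit)) = LinearMap.id
  unit_right : mu.comp (((TensorProduct.mk R M M).flip unit).comp (signAction 𝒜 (-dm))) =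
    LinearMap.id
  /-- `(ε⊗1)λ = 1` -/
  counit_left : (contrL counit).comp lam = LinearMap.id
  /-- `(-1)^{|λ|}(1⊗ε)λ = 1` -/
  counit_right : ksign dl • ((contrR 𝒜 counit (-dl)).comp lam) = LinearMap.id
  cop : M ⊗[R] M
  cop_def : cop = ksign (dl * dm + dm) • lam unit
  pr : M ⊗[R] M →ₗ[R] R
  /-- the pairing `p = (-1)^{|λ|} εμ` -/
  pr_def : pr = ksign dl • (counit.comp mu)
  cofrob_left : lam = (TensorProduct.map (signAction 𝒜 dm) mu).comp
    ((TensorProduct.assoc R M M M).toLinearMap.comp (TensorProduct.mk R (M ⊗[R] M) M cop))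
  cofrob_right : lam = ksign dm • ((LinearMap.rTensor M mu).comp
    ((TensorProduct.assoc R M M M).symm.toLinearMap.comp
      (((TensorProduct.mk R M (M ⊗[R] M)).flip cop).comp (signAction 𝒜 (dl - dm)))))
  /-- `μ = (-1)^{|μ||λ|+|λ|}(p⊗1)(1⊗λ)` -/
  cofrob_pr_left : mu = ksign (dm * dl + dl) • ((contrL pr).comp
    ((TensorProduct.assoc R M M M).symm.toLinearMap.comp
      (TensorProduct.map (signAction 𝒜 dl) lam)))
  /-- `μ = (-1)^{|μ||λ|}(1⊗p)(λ⊗1)` -/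
  cofrob_pr_right : mu = ksign (dm * dl) • ((contrR 𝒜 pr (dm - dl)).comp
    ((TensorProduct.assoc R M M M).toLinearMap.comp (LinearMap.rTensor M lam)))
  cop_symm : twist 𝒜 cop = ksign dl • cop
  /-- `pτ = (-1)^{|μ|} p` -/
  pr_symm : pr.comp (twist 𝒜) = ksign dm • pr

end GradedCoFrob

namespace GradedCoFrob

section Helpers

variable {R : Type} [CommRing R] {M : Type} [AddCommGroup M] [Module R M]

lemma ksign_add (m n : ℤ) : ksign (m + n) = ksign m * ksign n := by
  simp [ksign, zpow_add]

lemma ksign_even {n : ℤ} (h : Even n) : ksign n = 1 := by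
  simp [ksign, Even.neg_one_zpow h]

lemma ksign_odd {n : ℤ} (h : Odd n) : ksign n = -1 := by
  obtain ⟨k, rfl⟩ := h
  have h2 : ((-1 : ℤˣ) ^ (2 * k + 1)) = -1 := by
    rw [two_mul, zpow_add, zpow_add, zpow_one, Int.units_mul_self, one_mul]
  rw [ksign, h2]; rfl

lemma ksign_congr {a b : ℤ} (h : Even (a + b)) : ksign a = ksign b := by
  have hab := Int.even_add.mp h
  rcases Int.even_or_odd a with ha | ha
  · rw [ksign_even ha, ksign_even (hab.mp ha)]
  · have hb : Odd b := by
      rcases Int.even_or_odd b with hb | hb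
      · exact absurd (hab.mpr hb) (Int.not_even_iff_odd.mpr ha)
      · exact hb
    rw [ksign_odd ha, ksign_odd hb]

lemma ksign_ksign_smul {N : Type} [AddCommGroup N] {a b : ℤ} (h : Even (a + b)) (x : N) :
    ksign a • ksign b • x = x := by
  rw [smul_smul, ← ksign_add, ksign_even h, one_smul]

lemma even_add_sq (n : ℤ) : Even (n + n * n) := by
  rcases Int.even_or_odd n with h | h
  · exact h.add (h.mul_left n)
  · exact h.add_odd (h.mul h)

lemma even_poly1 (dl dm : ℤ) : Even (dm + dm * (dl - dm) + dl * dm) := by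
  have h : dm + dm * (dl - dm) + dl * dm = (dm + dm * dm) + 2 * (dm * dl - dm * dm) := by ring
  rw [h]
  exact (even_add_sq dm).add (even_two_mul _)

lemma even_poly2 (dl dm : ℤ) : Even (dl + dm + (dl - dm) * (dl - dm)) := by
  have h : dl + dm + (dl - dm) * (dl - dm) = ((dl - dm) + (dl - dm) * (dl - dm)) + 2 * dm := by
    ring
  rw [h]
  exact (even_add_sq _).add (even_two_mul _)

variable (𝒜 : ℤ → Submodule R M) [DirectSum.Decomposition 𝒜]

lemma fromPieces_of_mem {N : Type} [AddCommGroup N] [Module R N]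
    (f : ∀ i : ℤ, 𝒜 i →ₗ[R] N) {i : ℤ} {x : M} (hx : x ∈ 𝒜 i) :
    fromPieces 𝒜 f x = f i ⟨x, hx⟩ := by
  simp only [fromPieces, fromPiecesHom, LinearMap.comp_apply, LinearMap.lcomp_apply,
    LinearEquiv.coe_toLinearMap, LinearEquiv.coe_coe, DirectSum.decomposeLinearEquiv_apply,
    DirectSum.decompose_of_mem 𝒜 hx]
  exact DFinsupp.lsum_single _ _ _ _

lemma signAction_of_mem {d i : ℤ} {x : M} (hx : x ∈ 𝒜 i) :
    signAction 𝒜 d x = ksign (d * i) • x := by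
  rw [signAction, fromPieces_of_mem 𝒜 _ hx]; rfl

lemma ext_homog {N : Type} [AddCommGroup N] [Module R N] {f g : M →ₗ[R] N}
    (h : ∀ i : ℤ, ∀ x ∈ 𝒜 i, f x = g x) : f = g := by
  ext x
  refine DirectSum.Decomposition.inductionOn 𝒜 (motive := fun x => f x = g x) (by simp)
    (fun {i} m => h i m m.2) (fun a b ha hb => by simp only [map_add, ha, hb]) x

lemma ext_homog₂ {N : Type} [AddCommGroup N] [Module R N] {f g : M ⊗[R] M →ₗ[R] N}
    (h : ∀ i j : ℤ, ∀ x ∈ 𝒜 i, ∀ y ∈ 𝒜 j, f (x ⊗ₜ[R] y) = g (x ⊗ₜ[R] y)) : f = g := by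
  apply TensorProduct.ext
  apply ext_homog 𝒜
  intro i x hx
  apply ext_homog 𝒜
  intro j y hy
  simpa using h i j x hx y hy

lemma signAction_comp (d e : ℤ) :
    (signAction 𝒜 d).comp (signAction 𝒜 e) = signAction 𝒜 (d + e) := by
  apply ext_homog 𝒜
  intro i x hx
  simp only [LinearMap.comp_apply, signAction_of_mem 𝒜 hx, map_zsmul, smul_smul, ← ksign_add]
  congr 2
  ring

lemma signAction_signAction (d e : ℤ) (x : M) :
    signAction 𝒜 d (signAction 𝒜 e x) = signAction 𝒜 (d + e) x :=
  LinearMap.congr_fun (signAction_comp 𝒜 d e) x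

lemma sign_mu_comp {dm : ℤ} {mu : M ⊗[R] M →ₗ[R] M} (hmu : IsHomogProd 𝒜 dm mu) (d : ℤ) :
    (signAction 𝒜 d).comp mu
      = ksign (d * dm) • mu.comp (TensorProduct.map (signAction 𝒜 d) (signAction 𝒜 d)) := by
  apply ext_homog₂ 𝒜
  intro i j x hx y hy
  simp only [LinearMap.comp_apply, LinearMap.smul_apply, TensorProduct.map_tmul,
    signAction_of_mem 𝒜 hx, signAction_of_mem 𝒜 hy, signAction_of_mem 𝒜 (hmu i j x hx y hy),
    TensorProduct.tmul_smul, ← TensorProduct.smul_tmul', map_zsmul, smul_smul, ← ksign_add]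
  congr 2
  ring

lemma sign_mu_apply {dm : ℤ} {mu : M ⊗[R] M →ₗ[R] M} (hmu : IsHomogProd 𝒜 dm mu) (d : ℤ)
    (w : M ⊗[R] M) :
    signAction 𝒜 d (mu w)
      = ksign (d * dm) • mu (TensorProduct.map (signAction 𝒜 d) (signAction 𝒜 d) w) := by
  simpa using LinearMap.congr_fun (sign_mu_comp 𝒜 hmu d) w

lemma map_sign_tgrade {t : ℤ} (a b : ℤ) {z : M ⊗[R] M} (hz : z ∈ tgrade 𝒜 t) :
    TensorProduct.map (signAction 𝒜 a) (signAction 𝒜 b) z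
      = ksign (b * t) • TensorProduct.map (signAction 𝒜 (a - b)) LinearMap.id z := by
  refine Submodule.iSup_induction (motive := fun z =>
      TensorProduct.map (signAction 𝒜 a) (signAction 𝒜 b) z
        = ksign (b * t) • TensorProduct.map (signAction 𝒜 (a - b)) LinearMap.id z) _ hz
    ?_ (by simp) ?_
  · intro i z hzi
    simp only [tpiece, LinearMap.mem_range] at hzi
    obtain ⟨w, rfl⟩ := hzi
    induction w using TensorProduct.induction_on with
    | zero => simp
    | tmul p q =>
      simp only [TensorProduct.map_tmul, Submodule.coe_subtype,
        signAction_of_mem 𝒜 p.2, signAction_of_mem 𝒜 q.2, LinearMap.id_coe, id_eq,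
        TensorProduct.tmul_smul, ← TensorProduct.smul_tmul', smul_smul, ← ksign_add]
      congr 2
      ring
    | add u v hu hv => simp only [map_add, smul_add, hu, hv]
  · intro u v hu hv
    simp only [map_add, smul_add, hu, hv]

lemma cop_mem (U : UnitalCoFrob R 𝒜) : U.cop ∈ tgrade 𝒜 (U.dl - U.dm) := by
  rw [U.cop_def, show U.dl - U.dm = -U.dm + U.dl from by ring]
  exact Submodule.smul_of_tower_mem _ _ (U.lam_homog (-U.dm) U.unit U.unit_homog)

lemma assoc_symm_left (z u : M ⊗[R] M) :
    (TensorProduct.assoc R (M ⊗[R] M) M M).symm (z ⊗ₜ[R] u)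
      = LinearMap.rTensor M ((TensorProduct.mk R (M ⊗[R] M) M) z) u := by
  induction u using TensorProduct.induction_on with
  | zero => simp
  | tmul x y => simp
  | add u v hu hv => simp only [TensorProduct.tmul_add, map_add, hu, hv]

/-- the operation `p ⊗ q ↦ Σ (p ⊗ μ(q ⊗ w₁)) ⊗ w₂` for `w = Σ w₁ ⊗ w₂`. -/
noncomputable def K0 (mu : M ⊗[R] M →ₗ[R] M) (w : M ⊗[R] M) :
    M ⊗[R] M →ₗ[R] (M ⊗[R] M) ⊗[R] M :=
  (LinearMap.rTensor M (LinearMap.lTensor M mu)).comp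
    ((LinearMap.rTensor M (TensorProduct.assoc R M M M).toLinearMap).comp
      (((TensorProduct.assoc R (M ⊗[R] M) M M).symm.toLinearMap).comp
        ((TensorProduct.mk R (M ⊗[R] M) (M ⊗[R] M)).flip w)))

lemma K0_tmul (mu : M ⊗[R] M →ₗ[R] M) (w1 w2 p q : M) :
    K0 mu (w1 ⊗ₜ[R] w2) (p ⊗ₜ[R] q) = (p ⊗ₜ[R] mu (q ⊗ₜ[R] w1)) ⊗ₜ[R] w2 := by
  simp [K0]

lemma K0_add (mu : M ⊗[R] M →ₗ[R] M) (w w' : M ⊗[R] M) :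
    K0 mu (w + w') = K0 mu w + K0 mu w' := by
  simp [K0, map_add, LinearMap.comp_add, LinearMap.add_comp]

lemma K0_zero (mu : M ⊗[R] M →ₗ[R] M) : K0 mu 0 = 0 := by
  simp [K0, map_zero, LinearMap.comp_zero, LinearMap.zero_comp]

lemma idA (mu : M ⊗[R] M →ₗ[R] M) (s : M →ₗ[R] M) (z : M ⊗[R] M) (w1 w2 : M) :
    (TensorProduct.map s mu) ((TensorProduct.assoc R M M M) (z ⊗ₜ[R] w1)) ⊗ₜ[R] w2
      = K0 mu (w1 ⊗ₜ[R] w2) (TensorProduct.map s LinearMap.id z) := by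
  induction z using TensorProduct.induction_on with
  | zero => simp
  | tmul z1 z2 => simp [K0_tmul]
  | add u v hu hv =>
    simp only [TensorProduct.add_tmul, map_add, TensorProduct.tmul_add, hu, hv]

lemma idB (mu : M ⊗[R] M →ₗ[R] M) (z : M ⊗[R] M) (p q : M) :
    (TensorProduct.assoc R M M M).symm
        (p ⊗ₜ[R] (LinearMap.rTensor M mu ((TensorProduct.assoc R M M M).symm (q ⊗ₜ[R] z))))
      = K0 mu z (p ⊗ₜ[R] q) := by
  induction z using TensorProduct.induction_on with
  | zero => simp [K0_zero]
  | tmul z1 z2 => simp [K0_tmul]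
  | add u v hu hv =>
    simp only [TensorProduct.tmul_add, map_add, K0_add, LinearMap.add_apply, hu, hv]

lemma map_smul_second (k : ℤ) (f g h : M →ₗ[R] M) (hgh : ∀ m, g m = k • h m) (z : M ⊗[R] M) :
    TensorProduct.map f g z = k • TensorProduct.map f h z := by
  induction z using TensorProduct.induction_on with
  | zero => simp
  | tmul a b => simp [hgh b, TensorProduct.tmul_smul]
  | add u v hu hv => simp only [map_add, smul_add, hu, hv]

end Helpers

/-- In a unital coFrobenius bialgebra `(A,μ,λ,η)` with copairing
`c = (-1)^{|λ||μ|+|μ|}λη` one has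
`(1⊗μ⊗1)(c⊗c) = (λ⊗1)c = (-1)^{|λ|}(1⊗λ)c` and
`(1⊗μ)(λ⊗1) = (μ⊗1)(1⊗λ) = (μ⊗μ)(1⊗c⊗1) = (-1)^{|λ||μ|}λμ`. -/
theorem unital_coFrobenius_identities {R : Type} [CommRing R] {M : Type} [AddCommGroup M]
    [Module R M] [Module.Free R M] [Module.Finite R M]
    (𝒜 : ℤ → Submodule R M) [DirectSum.Decomposition 𝒜]
    (U : UnitalCoFrob R 𝒜) :
    -- (1⊗μ⊗1)(c⊗c) = (λ⊗1)c
    (((LinearMap.rTensor M (TensorProduct.map (signAction 𝒜 U.dm) U.mu)).comp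
        ((LinearMap.rTensor M (TensorProduct.assoc R M M M).toLinearMap).comp
          (TensorProduct.assoc R (M ⊗[R] M) M M).symm.toLinearMap))
        (U.cop ⊗ₜ[R] U.cop)
      = LinearMap.rTensor M U.lam U.cop) ∧
    -- (λ⊗1)c = (-1)^{|λ|}(1⊗λ)c
    (LinearMap.rTensor M U.lam U.cop =
      ksign U.dl • ((TensorProduct.assoc R M M M).symm.toLinearMap
        ((TensorProduct.map (signAction 𝒜 U.dl) U.lam) U.cop))) ∧
    -- (1⊗μ)(λ⊗1) = (μ⊗1)(1⊗λ)
    ((TensorProduct.map (signAction 𝒜 U.dm) U.mu).comp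
        ((TensorProduct.assoc R M M M).toLinearMap.comp (LinearMap.rTensor M U.lam))
      = (LinearMap.rTensor M U.mu).comp
        ((TensorProduct.assoc R M M M).symm.toLinearMap.comp
          (TensorProduct.map (signAction 𝒜 U.dl) U.lam))) ∧
    -- (μ⊗1)(1⊗λ) = (μ⊗μ)(1⊗c⊗1)
    ((LinearMap.rTensor M U.mu).comp
        ((TensorProduct.assoc R M M M).symm.toLinearMap.comp
          (TensorProduct.map (signAction 𝒜 U.dl) U.lam))
      = (TensorProduct.map
          (U.mu.comp (TensorProduct.map (signAction 𝒜 U.dm) (signAction 𝒜 U.dm)))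
          U.mu).comp (midIns 𝒜 U.cop (U.dl - U.dm))) ∧
    -- (μ⊗μ)(1⊗c⊗1) = (-1)^{|λ||μ|}λμ
    ((TensorProduct.map
        (U.mu.comp (TensorProduct.map (signAction 𝒜 U.dm) (signAction 𝒜 U.dm)))
        U.mu).comp (midIns 𝒜 U.cop (U.dl - U.dm))
      = ksign (U.dl * U.dm) • (U.lam.comp U.mu)) := by
  have hcop := cop_mem 𝒜 U
  have g1 : (((LinearMap.rTensor M (TensorProduct.map (signAction 𝒜 U.dm) U.mu)).comp
        ((LinearMap.rTensor M (TensorProduct.assoc R M M M).toLinearMap).comp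
          (TensorProduct.assoc R (M ⊗[R] M) M M).symm.toLinearMap))
        (U.cop ⊗ₜ[R] U.cop)
      = LinearMap.rTensor M U.lam U.cop) := by
    conv_rhs => rw [U.cofrob_left]
    simp only [LinearMap.rTensor_comp, LinearMap.comp_apply, LinearEquiv.coe_coe]
    rw [assoc_symm_left]
  have step1 : LinearMap.rTensor M U.lam U.cop
      = K0 U.mu U.cop (TensorProduct.map (signAction 𝒜 U.dm) LinearMap.id U.cop) := by
    have h : ∀ w : M ⊗[R] M, LinearMap.rTensor M U.lam w
        = K0 U.mu w (TensorProduct.map (signAction 𝒜 U.dm) LinearMap.id U.cop) := by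
      intro w
      induction w using TensorProduct.induction_on with
      | zero => simp [K0_zero]
      | tmul w1 w2 =>
        rw [LinearMap.rTensor_tmul]
        conv_lhs => rw [U.cofrob_left]
        simp only [LinearMap.comp_apply, LinearEquiv.coe_coe, TensorProduct.mk_apply]
        exact idA U.mu (signAction 𝒜 U.dm) U.cop w1 w2
      | add u v hu hv =>
        simp only [map_add, K0_add, LinearMap.add_apply, hu, hv]
    exact h U.cop
  have step2 : (TensorProduct.assoc R M M M).symm.toLinearMap
        ((TensorProduct.map (signAction 𝒜 U.dl) U.lam) U.cop)
      = ksign U.dm • K0 U.mu U.cop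
          (TensorProduct.map (signAction 𝒜 U.dl) (signAction 𝒜 (U.dl - U.dm)) U.cop) := by
    have h : ∀ w : M ⊗[R] M, (TensorProduct.assoc R M M M).symm.toLinearMap
          ((TensorProduct.map (signAction 𝒜 U.dl) U.lam) w)
        = ksign U.dm • K0 U.mu U.cop
            (TensorProduct.map (signAction 𝒜 U.dl) (signAction 𝒜 (U.dl - U.dm)) w) := by
      intro w
      induction w using TensorProduct.induction_on with
      | zero => simp; exact (smul_zero _).symm
      | tmul w1 w2 =>
        simp only [TensorProduct.map_tmul, LinearEquiv.coe_coe]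
        conv_lhs => rw [U.cofrob_right]
        simp only [LinearMap.smul_apply, LinearMap.comp_apply, LinearEquiv.coe_coe,
          LinearMap.flip_apply, TensorProduct.mk_apply, TensorProduct.tmul_smul, map_zsmul]
        rw [idB]
      | add u v hu hv =>
        simp only [map_add, smul_add, TensorProduct.tmul_add, hu, hv]
        exact (smul_add _ _ _).symm
    exact h U.cop
  have g2 : LinearMap.rTensor M U.lam U.cop =
      ksign U.dl • ((TensorProduct.assoc R M M M).symm.toLinearMap
        ((TensorProduct.map (signAction 𝒜 U.dl) U.lam) U.cop)) := by
    rw [step2, step1, map_sign_tgrade 𝒜 U.dl (U.dl - U.dm) hcop,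
      show U.dl - (U.dl - U.dm) = U.dm from by ring, map_zsmul, smul_smul, smul_smul,
      ← ksign_add, ← ksign_add, ksign_even (even_poly2 U.dl U.dm), one_smul]
  have g3 : (TensorProduct.map (signAction 𝒜 U.dm) U.mu).comp
        ((TensorProduct.assoc R M M M).toLinearMap.comp (LinearMap.rTensor M U.lam))
      = (LinearMap.rTensor M U.mu).comp
        ((TensorProduct.assoc R M M M).symm.toLinearMap.comp
          (TensorProduct.map (signAction 𝒜 U.dl) U.lam)) := by
    apply TensorProduct.ext'
    intro x y
    simp only [LinearMap.comp_apply, LinearEquiv.coe_coe, LinearMap.rTensor_tmul,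
      TensorProduct.map_tmul]
    conv_lhs => rw [U.cofrob_right]
    conv_rhs => rw [U.cofrob_left]
    simp only [LinearMap.smul_apply, LinearMap.comp_apply, LinearEquiv.coe_coe,
      LinearMap.flip_apply, TensorProduct.mk_apply, TensorProduct.smul_tmul', map_zsmul]
    generalize U.cop = c
    induction c using TensorProduct.induction_on with
    | zero => simp
    | tmul c1 c2 =>
      simp only [TensorProduct.assoc_symm_tmul, LinearMap.rTensor_tmul,
        ← TensorProduct.smul_tmul', map_zsmul, TensorProduct.assoc_tmul,
        TensorProduct.map_tmul]
      rw [← LinearEquiv.coe_toLinearMap, LinearMap.map_smul_of_tower, LinearMap.map_smul_of_tower]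
      simp only [LinearEquiv.coe_coe, TensorProduct.assoc_tmul, TensorProduct.map_tmul]
      rw [sign_mu_apply 𝒜 U.mu_homog U.dm]
      simp only [← TensorProduct.smul_tmul', TensorProduct.map_tmul]
      rw [signAction_signAction, show U.dm + (U.dl - U.dm) = U.dl from by ring]
      exact ksign_ksign_smul (even_add_sq U.dm) _
    | add u v hu hv =>
      simp only [TensorProduct.add_tmul, TensorProduct.tmul_add, map_add, smul_add, hu, hv]
  have g4 : (LinearMap.rTensor M U.mu).comp
        ((TensorProduct.assoc R M M M).symm.toLinearMap.comp
          (TensorProduct.map (signAction 𝒜 U.dl) U.lam))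
      = (TensorProduct.map
          (U.mu.comp (TensorProduct.map (signAction 𝒜 U.dm) (signAction 𝒜 U.dm)))
          U.mu).comp (midIns 𝒜 U.cop (U.dl - U.dm)) := by
    apply TensorProduct.ext'
    intro x y
    simp only [midIns, LinearMap.comp_apply, LinearEquiv.coe_coe, TensorProduct.map_tmul,
      LinearMap.rTensor_tmul, LinearMap.flip_apply, TensorProduct.mk_apply]
    conv_lhs => rw [U.cofrob_left]
    simp only [LinearMap.comp_apply, LinearEquiv.coe_coe, TensorProduct.mk_apply]
    generalize U.cop = c
    induction c using TensorProduct.induction_on with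
    | zero => simp
    | tmul c1 c2 =>
      simp only [TensorProduct.assoc_symm_tmul, TensorProduct.assoc_tmul,
        LinearMap.rTensor_tmul, TensorProduct.map_tmul, LinearMap.comp_apply]
      rw [signAction_signAction, show U.dm + (U.dl - U.dm) = U.dl from by ring]
    | add u v hu hv =>
      simp only [TensorProduct.add_tmul, TensorProduct.tmul_add, map_add, hu, hv]
  have g5 : (TensorProduct.map
        (U.mu.comp (TensorProduct.map (signAction 𝒜 U.dm) (signAction 𝒜 U.dm)))
        U.mu).comp (midIns 𝒜 U.cop (U.dl - U.dm))
      = ksign (U.dl * U.dm) • (U.lam.comp U.mu) := by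
    rw [← g4, ← g3]
    apply TensorProduct.ext'
    intro x y
    have aux3 : ∀ m : M, U.mu (U.mu (m ⊗ₜ[R] x) ⊗ₜ[R] y)
        = ksign U.dm • U.mu (signAction 𝒜 U.dm m ⊗ₜ[R] U.mu (x ⊗ₜ[R] y)) := by
      intro m
      have h := LinearMap.congr_fun U.mu_assoc ((m ⊗ₜ[R] x) ⊗ₜ[R] y)
      simpa only [LinearMap.comp_apply, LinearMap.smul_apply, LinearMap.rTensor_tmul,
        LinearEquiv.coe_coe, TensorProduct.assoc_tmul, TensorProduct.map_tmul] using h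
    have aux1 : ∀ z : M ⊗[R] M,
        (TensorProduct.map (signAction 𝒜 U.dm) U.mu)
            ((TensorProduct.assoc R M M M)
              (((TensorProduct.map (signAction 𝒜 U.dm) U.mu)
                  ((TensorProduct.assoc R M M M) (z ⊗ₜ[R] x))) ⊗ₜ[R] y))
          = TensorProduct.map (signAction 𝒜 (U.dm + U.dm))
              ((U.mu.comp ((TensorProduct.mk R M M).flip y)).comp
                (U.mu.comp ((TensorProduct.mk R M M).flip x))) z := by
      intro z
      induction z using TensorProduct.induction_on with
      | zero => simp
      | tmul z1 z2 =>
        simp only [TensorProduct.assoc_tmul, TensorProduct.map_tmul, LinearMap.comp_apply,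
          LinearMap.flip_apply, TensorProduct.mk_apply, signAction_signAction]
      | add u v hu hv =>
        simp only [TensorProduct.add_tmul, map_add, hu, hv]
    have aux2 : ∀ z : M ⊗[R] M,
        (TensorProduct.map (signAction 𝒜 U.dm) U.mu)
            ((TensorProduct.assoc R M M M) (z ⊗ₜ[R] U.mu (x ⊗ₜ[R] y)))
          = TensorProduct.map (signAction 𝒜 U.dm)
              (U.mu.comp ((TensorProduct.mk R M M).flip (U.mu (x ⊗ₜ[R] y)))) z := by
      intro z
      induction z using TensorProduct.induction_on with
      | zero => simp
      | tmul z1 z2 =>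
        simp only [TensorProduct.assoc_tmul, TensorProduct.map_tmul, LinearMap.comp_apply,
          LinearMap.flip_apply, TensorProduct.mk_apply]
      | add u v hu hv => simp only [TensorProduct.add_tmul, map_add, hu, hv]
    have hgh : ∀ m : M, ((U.mu.comp ((TensorProduct.mk R M M).flip y)).comp
          (U.mu.comp ((TensorProduct.mk R M M).flip x))) m
        = ksign U.dm • ((U.mu.comp ((TensorProduct.mk R M M).flip (U.mu (x ⊗ₜ[R] y)))).comp
            (signAction 𝒜 U.dm)) m := by
      intro m
      simpa only [LinearMap.comp_apply, LinearMap.flip_apply, TensorProduct.mk_apply]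
        using aux3 m
    have hsplit : TensorProduct.map (signAction 𝒜 (U.dm + U.dm))
          ((U.mu.comp ((TensorProduct.mk R M M).flip (U.mu (x ⊗ₜ[R] y)))).comp
            (signAction 𝒜 U.dm))
        = (TensorProduct.map LinearMap.id
            (U.mu.comp ((TensorProduct.mk R M M).flip (U.mu (x ⊗ₜ[R] y))))).comp
          (TensorProduct.map (signAction 𝒜 (U.dm + U.dm)) (signAction 𝒜 U.dm)) := by
      rw [← TensorProduct.map_comp, LinearMap.id_comp]
    have hmerge : (TensorProduct.map LinearMap.id
          (U.mu.comp ((TensorProduct.mk R M M).flip (U.mu (x ⊗ₜ[R] y))))).comp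
          (TensorProduct.map (signAction 𝒜 U.dm) LinearMap.id)
        = TensorProduct.map (signAction 𝒜 U.dm)
            (U.mu.comp ((TensorProduct.mk R M M).flip (U.mu (x ⊗ₜ[R] y)))) := by
      rw [← TensorProduct.map_comp, LinearMap.id_comp, LinearMap.comp_id]
    simp only [LinearMap.comp_apply, LinearEquiv.coe_coe, LinearMap.rTensor_tmul,
      LinearMap.smul_apply]
    rw [U.cofrob_left]
    simp only [LinearMap.comp_apply, LinearEquiv.coe_coe, TensorProduct.mk_apply]
    rw [aux1 U.cop, aux2 U.cop,
      map_smul_second (ksign U.dm) (signAction 𝒜 (U.dm + U.dm)) _ _ hgh U.cop, hsplit,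
      LinearMap.comp_apply, map_sign_tgrade 𝒜 (U.dm + U.dm) U.dm hcop,
      show U.dm + U.dm - U.dm = U.dm from by ring, map_zsmul,
      ← LinearMap.comp_apply (TensorProduct.map LinearMap.id
          (U.mu.comp ((TensorProduct.mk R M M).flip (U.mu (x ⊗ₜ[R] y))))), hmerge,
      smul_smul, ← ksign_add, ksign_congr (even_poly1 U.dl U.dm)]
  exact ⟨g1, g2, g3, g4, g5⟩


end GradedCoFrob
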